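/- arXiv:2509.02562 — 2 statements merged into one kernel-verified Lean document; each statement's English description precedes it below -/
import Mathlib

section
/- Given any array of points (x_i^h)_{i,h≥1} in T_n^d, for every p ∈ ℕ and every k ∈ ℕ one has B^{p+1}(k) = ⋃_{i=1}^k ⋃_{1 ≤ h ≤ H_i^{p+1}} B̄(x_i^h, k−i), and likewise B^*(k) = ⋃_{i=1}^k ⋃_{1 ≤ h ≤ H_i^*} B̄(x_i^h, k−i) (unions over all integers h with 1 ≤ h ≤ the possibly infinite index). -/
open MeasureTheory ProbabilityTheory Filter

/-- The discrete torus graph on `(ℤ/nℤ)^d`. -/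
def torusGraph (d n : ℕ) : SimpleGraph (Fin d → ZMod n) where
  Adj x y := x ≠ y ∧ ∃ i, (x i = y i + 1 ∨ y i = x i + 1) ∧ ∀ j, j ≠ i → x j = y j
  symm := by
    constructor
    rintro x y ⟨hne, i, hor, hj⟩
    exact ⟨hne.symm, i, hor.symm, fun j hji => (hj j hji).symm⟩
  loopless := by constructor; rintro x ⟨hne, -⟩; exact hne rfl

/-- Closed ball of radius `r` around `x` in the graph metric of the torus. -/
def torusBall (d n : ℕ) (x : Fin d → ZMod n) (r : ℕ) : Set (Fin d → ZMod n) :=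
  {y | (torusGraph d n).dist x y ≤ r}

/-- `burnedSet d n x k = ⋃_{i=1}^k B̄(x_i, k−i)`, with the `0`-indexed convention
`x i = x_{i+1}`. -/
def burnedSet (d n : ℕ) (x : ℕ → (Fin d → ZMod n)) (k : ℕ) : Set (Fin d → ZMod n) :=
  ⋃ i ∈ Finset.range k, torusBall d n (x i) (k - 1 - i)

/-- The burning number of the torus. -/
noncomputable def burningNumber (d n : ℕ) : ℕ :=
  sInf {k | 1 ≤ k ∧ ∃ x : ℕ → (Fin d → ZMod n), burnedSet d n x k = Set.univ}

/-- The first time at which the burning process covers the whole torus. -/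
noncomputable def burnTime (d n : ℕ) (x : ℕ → (Fin d → ZMod n)) : ℕ :=
  sInf {k | burnedSet d n x k = Set.univ}

open Classical in
/-- The intermediate burning processes `B^p(·)` constructed from the array `xs`
(`xs i h` stands for `x_{i+1}^{h+1}`): `B^0(k) = ∅` and `B^{p+1}(k) = ⋃_{i=1}^k
B̄(y_i^{p+1}, k−i)`, where `y_i^{p+1}` is the first point of `(x_i^h)_h` lying outside
`B^p(i−1)` (and `x_i^1` if there is none). -/
noncomputable def interB (d n : ℕ) (xs : ℕ → ℕ → (Fin d → ZMod n)) :
    ℕ → ℕ → Set (Fin d → ZMod n)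
  | 0, _ => ∅
  | (p + 1), k =>
      ⋃ i ∈ Finset.range k,
        torusBall d n
          (if h : ∃ m : ℕ, xs i m ∉ interB d n xs p i then xs i (Nat.find h) else xs i 0)
          (k - 1 - i)

open Classical in
/-- `interH d n xs p i` is `H_{i+1}^{p+1} = inf{h ≥ 1 : x_{i+1}^h ∉ B^p(i)} ∈ ℕ∞`,
recorded `0`-indexed (so `interH d n xs p i = h₀` corresponds to `H_{i+1}^{p+1} = h₀+1`). -/
noncomputable def interH (d n : ℕ) (xs : ℕ → ℕ → (Fin d → ZMod n)) (p i : ℕ) : ℕ∞ :=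
  if h : ∃ m : ℕ, xs i m ∉ interB d n xs p i then (Nat.find h : ℕ∞) else ⊤

open Classical in
/-- Auxiliary construction for the rejection-sampling process: `starYaux d n xs (k+1)`
agrees with `starYaux d n xs k` below index `k` and chooses `y_{k+1}^*` at index `k`. -/
noncomputable def starYaux (d n : ℕ) (xs : ℕ → ℕ → (Fin d → ZMod n)) :
    ℕ → ℕ → (Fin d → ZMod n)
  | 0, i => xs i 0
  | (k + 1), i =>
      if i = k then
        (if h : ∃ m : ℕ,
            xs k m ∉ ⋃ j ∈ Finset.range k, torusBall d n (starYaux d n xs k j) (k - 1 - j)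
          then xs k (Nat.find h) else xs k 0)
      else starYaux d n xs k i

/-- `starY d n xs i` is the point `y_{i+1}^*` of the rejection-sampling process. -/
noncomputable def starY (d n : ℕ) (xs : ℕ → ℕ → (Fin d → ZMod n)) (i : ℕ) :
    Fin d → ZMod n :=
  starYaux d n xs (i + 1) i

/-- The rejection-sampling burning process `B^*(k) = ⋃_{i=1}^k B̄(y_i^*, k−i)`. -/
noncomputable def starB (d n : ℕ) (xs : ℕ → ℕ → (Fin d → ZMod n)) (k : ℕ) :
    Set (Fin d → ZMod n) :=
  ⋃ i ∈ Finset.range k, torusBall d n (starY d n xs i) (k - 1 - i)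

open Classical in
/-- `starH d n xs i` is `H_{i+1}^* = inf{h ≥ 1 : x_{i+1}^h ∉ B^*(i)} ∈ ℕ∞`, recorded
`0`-indexed. -/
noncomputable def starH (d n : ℕ) (xs : ℕ → ℕ → (Fin d → ZMod n)) (i : ℕ) : ℕ∞ :=
  if h : ∃ m : ℕ, xs i m ∉ starB d n xs i then (Nat.find h : ℕ∞) else ⊤

section Aux

open Classical SimpleGraph

lemma torus_reachable (d n : ℕ) (hn : 1 ≤ n) (x y : Fin d → ZMod n) :
    (torusGraph d n).Reachable x y := by
  rcases Nat.lt_or_ge n 2 with h1 | h2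
  · have hn1 : n = 1 := by omega
    subst hn1
    have hxy : x = y := funext fun i => Subsingleton.elim _ _
    exact hxy ▸ SimpleGraph.Reachable.refl x
  · haveI : NeZero n := ⟨by omega⟩
    haveI : Fact (1 < n) := ⟨h2⟩
    have hstep : ∀ (x : Fin d → ZMod n) (i : Fin d) (t : ℕ),
        (torusGraph d n).Reachable x (Function.update x i (x i + (t : ZMod n))) := by
      intro x i t
      induction t with
      | zero =>
          have hx : Function.update x i (x i + ((0 : ℕ) : ZMod n)) = x := by simp
          rw [hx]
      | succ t ih =>
          refine ih.trans (SimpleGraph.Adj.reachable ?_)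
          constructor
          · intro hc
            have h2 := congrFun hc i
            simp only [Function.update_self] at h2
            have h3 : ((t : ZMod n)) = ((t + 1 : ℕ) : ZMod n) := add_left_cancel h2
            push_cast at h3
            exact one_ne_zero (left_eq_add.mp h3)
          · refine ⟨i, Or.inr ?_, fun j hj => ?_⟩
            · simp only [Function.update_self]; push_cast; ring
            · simp [Function.update_of_ne hj]
    have key : ∀ j : ℕ,
        (torusGraph d n).Reachable x (fun i => if (i : ℕ) < j then y i else x i) := by
      intro j
      induction j with
      | zero =>
          have hx : (fun i : Fin d => if (i : ℕ) < 0 then y i else x i) = x := by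
            funext i; simp
          rw [hx]
      | succ j ih =>
          by_cases hj : j < d
          · have heq : (fun i : Fin d => if (i : ℕ) < j + 1 then y i else x i)
                = Function.update (fun i : Fin d => if (i : ℕ) < j then y i else x i) ⟨j, hj⟩
                    ((fun i : Fin d => if (i : ℕ) < j then y i else x i) ⟨j, hj⟩
                      + (((y ⟨j, hj⟩ - x ⟨j, hj⟩).val : ℕ) : ZMod n)) := by
              funext i
              rcases eq_or_ne i ⟨j, hj⟩ with rfl | hi
              · simp only [Function.update_self]
                rw [if_pos (by simp), if_neg (by simp)]
                rw [ZMod.natCast_val, ZMod.cast_id]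
                ring
              · rw [Function.update_of_ne hi]
                have hij : (i : ℕ) ≠ j := fun hc => hi (Fin.ext hc)
                by_cases h' : (i : ℕ) < j
                · rw [if_pos (by omega), if_pos h']
                · rw [if_neg (by omega), if_neg h']
            rw [heq]
            exact ih.trans (hstep _ ⟨j, hj⟩ _)
          · have heq : (fun i : Fin d => if (i : ℕ) < j + 1 then y i else x i)
                = (fun i : Fin d => if (i : ℕ) < j then y i else x i) := by
              funext i
              have hlt : (i : ℕ) < j := lt_of_lt_of_le i.isLt (by omega)
              rw [if_pos (by omega), if_pos hlt]
            rw [heq]; exact ih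
    have hy : y = fun i : Fin d => if (i : ℕ) < d then y i else x i := by
      funext i; rw [if_pos i.isLt]
    rw [hy]
    exact key d

lemma torus_connected (d n : ℕ) (hn : 1 ≤ n) : (torusGraph d n).Connected := by
  rw [SimpleGraph.connected_iff]
  exact ⟨fun x y => torus_reachable d n hn x y, ⟨fun _ => 0⟩⟩

lemma torusBall_mono (d n : ℕ) (c : Fin d → ZMod n) {r r' : ℕ} (h : r ≤ r') :
    torusBall d n c r ⊆ torusBall d n c r' := by
  intro w hw
  simp only [torusBall, Set.mem_setOf_eq] at hw ⊢
  omega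

lemma torusBall_add (d n : ℕ) (hn : 1 ≤ n) {c z : Fin d → ZMod n} {r1 r2 : ℕ}
    (hz : z ∈ torusBall d n c r1) : torusBall d n z r2 ⊆ torusBall d n c (r1 + r2) := by
  intro w hw
  simp only [torusBall, Set.mem_setOf_eq] at hz hw ⊢
  have htri := (torus_connected d n hn).dist_triangle (u := c) (v := z) (w := w)
  omega

lemma expand (d n : ℕ) (hn : 1 ≤ n) (Y : ℕ → (Fin d → ZMod n)) {i k : ℕ} (hik : i < k)
    {z : Fin d → ZMod n}
    (hz : z ∈ ⋃ j ∈ Finset.range i, torusBall d n (Y j) (i - 1 - j)) :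
    torusBall d n z (k - 1 - i) ⊆ ⋃ j ∈ Finset.range k, torusBall d n (Y j) (k - 1 - j) := by
  simp only [Set.mem_iUnion, Finset.mem_range, exists_prop] at hz
  obtain ⟨j, hji, hzj⟩ := hz
  intro w hw
  have h1 : w ∈ torusBall d n (Y j) ((i - 1 - j) + (k - 1 - i)) := torusBall_add d n hn hzj hw
  simp only [Set.mem_iUnion, Finset.mem_range, exists_prop]
  exact ⟨j, hji.trans hik, torusBall_mono d n _ (by omega) h1⟩

open Classical in
noncomputable def interY (d n : ℕ) (xs : ℕ → ℕ → (Fin d → ZMod n)) (p i : ℕ) :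
    Fin d → ZMod n :=
  if h : ∃ m : ℕ, xs i m ∉ interB d n xs p i then xs i (Nat.find h) else xs i 0

lemma interB_succ (d n : ℕ) (xs : ℕ → ℕ → (Fin d → ZMod n)) (p k : ℕ) :
    interB d n xs (p + 1) k
      = ⋃ i ∈ Finset.range k, torusBall d n (interY d n xs p i) (k - 1 - i) := rfl

end Aux

open Classical in
lemma interB_mono (d n : ℕ) (hn : 1 ≤ n) (xs : ℕ → ℕ → (Fin d → ZMod n)) :
    ∀ p k, interB d n xs p k ⊆ interB d n xs (p + 1) k := by
  intro p
  induction p with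
  | zero => intro k; simp [interB]
  | succ p ih =>
      intro k
      induction k using Nat.strong_induction_on with
      | _ k IH =>
        rw [interB_succ, interB_succ]
        intro w hw
        simp only [Set.mem_iUnion, Finset.mem_range, exists_prop] at hw
        obtain ⟨i, hik, hwi⟩ := hw
        by_cases hY : interY d n xs p i ∈ interB d n xs (p + 1) i
        · have h2 : interY d n xs p i ∈ interB d n xs (p + 2) i := IH i hik hY
          rw [interB_succ] at h2
          exact expand d n hn (interY d n xs (p + 1)) hik h2 hwi
        · have hex : ∃ m, xs i m ∉ interB d n xs (p + 1) i := by
            by_cases hp : ∃ m, xs i m ∉ interB d n xs p i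
            · exact ⟨Nat.find hp, by simpa only [interY, dif_pos hp] using hY⟩
            · exact ⟨0, by simpa only [interY, dif_neg hp] using hY⟩
          have hYeq : interY d n xs (p + 1) i = interY d n xs p i := by
            by_cases hp : ∃ m, xs i m ∉ interB d n xs p i
            · simp only [interY, dif_pos hex, dif_pos hp]
              have hle : Nat.find hex ≤ Nat.find hp :=
                Nat.find_le (by simpa only [interY, dif_pos hp] using hY)
              have hge : Nat.find hp ≤ Nat.find hex := by
                refine Nat.find_le ?_
                intro hc
                exact Nat.find_spec hex (ih i hc)
              exact congrArg (xs i) (le_antisymm hle hge)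
            · have h0 : xs i 0 ∈ interB d n xs p i := by
                by_contra hc; exact hp ⟨0, hc⟩
              exact absurd (ih i h0) (by simpa only [interY, dif_neg hp] using hY)
          simp only [Set.mem_iUnion, Finset.mem_range, exists_prop]
          exact ⟨i, hik, by rw [hYeq]; exact hwi⟩

open Classical in
lemma interB_eq_union (d n : ℕ) (hn : 1 ≤ n) (xs : ℕ → ℕ → (Fin d → ZMod n)) (p k : ℕ) :
    interB d n xs (p + 1) k
      = ⋃ i ∈ Finset.range k, ⋃ h : ℕ, ⋃ (_ : (h : ℕ∞) ≤ interH d n xs p i),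
          torusBall d n (xs i h) (k - 1 - i) := by
  apply Set.Subset.antisymm
  · rw [interB_succ]
    intro w hw
    simp only [Set.mem_iUnion, Finset.mem_range, exists_prop] at hw ⊢
    obtain ⟨i, hik, hwi⟩ := hw
    refine ⟨i, hik, ?_⟩
    by_cases hp : ∃ m, xs i m ∉ interB d n xs p i
    · refine ⟨Nat.find hp, ?_, ?_⟩
      · simp only [interH, dif_pos hp]; exact le_refl _
      · simpa only [interY, dif_pos hp] using hwi
    · refine ⟨0, ?_, ?_⟩
      · simp only [interH, dif_neg hp]; exact le_top
      · simpa only [interY, dif_neg hp] using hwi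
  · intro w hw
    simp only [Set.mem_iUnion, Finset.mem_range, exists_prop] at hw
    obtain ⟨i, hik, h, hh, hw⟩ := hw
    by_cases hp : ∃ m, xs i m ∉ interB d n xs p i
    · simp only [interH, dif_pos hp, Nat.cast_le] at hh
      rcases eq_or_lt_of_le hh with heq | hlt
      · rw [interB_succ]
        simp only [Set.mem_iUnion, Finset.mem_range, exists_prop]
        refine ⟨i, hik, ?_⟩
        simp only [interY, dif_pos hp, ← heq]
        exact hw
      · have hmem : xs i h ∈ interB d n xs p i := by
          by_contra hc
          exact Nat.find_min hp hlt hc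
        have hmem' : xs i h ∈ interB d n xs (p + 1) i := interB_mono d n hn xs p i hmem
        rw [interB_succ] at hmem' ⊢
        exact expand d n hn (interY d n xs p) hik hmem' hw
    · push_neg at hp
      have hmem' : xs i h ∈ interB d n xs (p + 1) i := interB_mono d n hn xs p i (hp h)
      rw [interB_succ] at hmem' ⊢
      exact expand d n hn (interY d n xs p) hik hmem' hw

lemma starYaux_eq (d n : ℕ) (xs : ℕ → ℕ → (Fin d → ZMod n)) :
    ∀ m j, j < m → starYaux d n xs m j = starY d n xs j := by
  intro m
  induction m with
  | zero => intro j hj; exact absurd hj (Nat.not_lt_zero j)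
  | succ m ih =>
      intro j hj
      rcases eq_or_lt_of_le (Nat.lt_succ_iff.mp hj) with heq | hlt
      · subst heq; rfl
      · show starYaux d n xs (m + 1) j = starY d n xs j
        rw [starYaux, if_neg (Nat.ne_of_lt hlt)]
        exact ih j hlt

open Classical in
lemma starY_eq (d n : ℕ) (xs : ℕ → ℕ → (Fin d → ZMod n)) (k : ℕ) :
    starY d n xs k
      = if h : ∃ m : ℕ, xs k m ∉ starB d n xs k then xs k (Nat.find h) else xs k 0 := by
  have hset : (⋃ j ∈ Finset.range k, torusBall d n (starYaux d n xs k j) (k - 1 - j))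
      = starB d n xs k := by
    unfold starB
    exact Set.iUnion_congr fun j => Set.iUnion_congr fun hj => by
      rw [starYaux_eq d n xs k j (Finset.mem_range.mp hj)]
  show starYaux d n xs (k + 1) k = _
  rw [starYaux, if_pos rfl, hset]

lemma starB_def' (d n : ℕ) (xs : ℕ → ℕ → (Fin d → ZMod n)) (k : ℕ) :
    starB d n xs k = ⋃ i ∈ Finset.range k, torusBall d n (starY d n xs i) (k - 1 - i) := rfl

open Classical in
lemma starB_eq_union (d n : ℕ) (hn : 1 ≤ n) (xs : ℕ → ℕ → (Fin d → ZMod n)) (k : ℕ) :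
    starB d n xs k
      = ⋃ i ∈ Finset.range k, ⋃ h : ℕ, ⋃ (_ : (h : ℕ∞) ≤ starH d n xs i),
          torusBall d n (xs i h) (k - 1 - i) := by
  apply Set.Subset.antisymm
  · rw [starB_def']
    intro w hw
    simp only [Set.mem_iUnion, Finset.mem_range, exists_prop] at hw ⊢
    obtain ⟨i, hik, hwi⟩ := hw
    refine ⟨i, hik, ?_⟩
    by_cases hp : ∃ m, xs i m ∉ starB d n xs i
    · refine ⟨Nat.find hp, ?_, ?_⟩
      · simp only [starH, dif_pos hp]; exact le_refl _
      · simpa only [starY_eq, dif_pos hp] using hwi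
    · refine ⟨0, ?_, ?_⟩
      · simp only [starH, dif_neg hp]; exact le_top
      · simpa only [starY_eq, dif_neg hp] using hwi
  · intro w hw
    simp only [Set.mem_iUnion, Finset.mem_range, exists_prop] at hw
    obtain ⟨i, hik, h, hh, hw⟩ := hw
    by_cases hp : ∃ m, xs i m ∉ starB d n xs i
    · simp only [starH, dif_pos hp, Nat.cast_le] at hh
      rcases eq_or_lt_of_le hh with heq | hlt
      · rw [starB_def']
        simp only [Set.mem_iUnion, Finset.mem_range, exists_prop]
        refine ⟨i, hik, ?_⟩
        rw [starY_eq, dif_pos hp, ← heq]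
        exact hw
      · have hmem : xs i h ∈ starB d n xs i := by
          by_contra hc
          exact Nat.find_min hp hlt hc
        rw [starB_def'] at hmem ⊢
        exact expand d n hn (starY d n xs) hik hmem hw
    · push_neg at hp
      have hmem : xs i h ∈ starB d n xs i := hp h
      rw [starB_def'] at hmem ⊢
      exact expand d n hn (starY d n xs) hik hmem hw

/-- For any array of points `(x_i^h)` of the torus, every `p` and every
`k`: `B^{p+1}(k) = ⋃_{i=1}^k ⋃_{1 ≤ h ≤ H_i^{p+1}} B̄(x_i^h, k−i)`, and likewise
`B^*(k) = ⋃_{i=1}^k ⋃_{1 ≤ h ≤ H_i^*} B̄(x_i^h, k−i)` (in the `0`-indexed conventions,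
the inner unions run over `h : ℕ` with `(h : ℕ∞) ≤ interH`, resp. `(h : ℕ∞) ≤ starH`). -/
theorem interB_starB_eq_union (d n : ℕ) (hd : 1 ≤ d) (hn : 1 ≤ n)
    (xs : ℕ → ℕ → (Fin d → ZMod n)) :
    ∀ p k : ℕ,
      (interB d n xs (p + 1) k
        = ⋃ i ∈ Finset.range k, ⋃ h : ℕ, ⋃ (_ : (h : ℕ∞) ≤ interH d n xs p i),
            torusBall d n (xs i h) (k - 1 - i)) ∧
      (starB d n xs k
        = ⋃ i ∈ Finset.range k, ⋃ h : ℕ, ⋃ (_ : (h : ℕ∞) ≤ starH d n xs i),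
            torusBall d n (xs i h) (k - 1 - i)) := by
  intro p k
  exact ⟨interB_eq_union d n hn xs p k, starB_eq_union d n hn xs k⟩
end

section
/- There exists a constant C = C(d) ∈ (1,∞) (in fact C = 8^d works) such that for every ε ∈ (0,∞) there exists N such that for all n ≥ N the following holds: setting r_k = ε·n^{d/(d+1)}·2^{−k} for k ≥ 1 and ℓ = ⌊(2/3)·log₂(ε·n^{d/(d+1)})⌋, there exist partitions P_1, P_2, …, P_ℓ of the vertex set of T_n^d such that P_{k+1} refines P_k for each 1 ≤ k ≤ ℓ−1, and for each 1 ≤ k ≤ ℓ every block A of P_k has diameter at most C·r_k in the graph metric of T_n^d and cardinality satisfying r_k^d ≤ #A ≤ C·r_k^d. -/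
open MeasureTheory ProbabilityTheory Filter

set_option linter.unusedSectionVars false


def cIdx (n s t : ℕ) : ℕ := min (t / s) (n / s - 1)

lemma cIdx_double (n s t : ℕ) :
    cIdx n (2 * s) t = min (cIdx n s t / 2) (n / (2 * s) - 1) := by
  unfold cIdx
  have h1 : t / (2 * s) = t / s / 2 := by rw [Nat.div_div_eq_div_mul, mul_comm]
  have h2 : n / (2 * s) = n / s / 2 := by rw [Nat.div_div_eq_div_mul, mul_comm]
  rw [h1, h2]
  omega

lemma le_of_cIdx_eq {n s u v : ℕ} (hs : 0 < s) (hv : v < n)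
    (h : cIdx n s u = cIdx n s v) : v ≤ u + 2 * s := by
  unfold cIdx at h
  have hus : min (u / s) (n / s - 1) * s ≤ u :=
    (Nat.le_div_iff_mul_le hs).mp (Nat.min_le_left _ _)
  rcases le_or_gt (v / s) (n / s - 1) with hle | hgt
  · have hv2 : v < (v / s + 1) * s := (Nat.div_lt_iff_lt_mul hs).mp (Nat.lt_succ_self _)
    have : min (u / s) (n / s - 1) = v / s := by omega
    nlinarith [hus, hv2, this]
  · have h1 : min (u / s) (n / s - 1) = n / s - 1 := by omega
    have h2 : n < (n / s + 1) * s := (Nat.div_lt_iff_lt_mul hs).mp (Nat.lt_succ_self _)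
    have h3 : (n / s - 1) * s ≤ u := h1 ▸ hus
    have h4 : (n / s + 1) * s ≤ (n / s - 1) * s + 2 * s := by
      rcases Nat.eq_zero_or_pos (n / s) with h | h
      · simp [h]; omega
      · have h5 : n / s + 1 = (n / s - 1) + 2 := by omega
        rw [h5, Nat.add_mul]
    omega



lemma zmod_sub_val {n : ℕ} [NeZero n] (a b : ZMod n) (h : a.val ≤ b.val) :
    (b - a).val = b.val - a.val := by
  have hb : ((b.val : ℕ) : ZMod n) = b := by rw [ZMod.natCast_val, ZMod.cast_id]
  have ha : ((a.val : ℕ) : ZMod n) = a := by rw [ZMod.natCast_val, ZMod.cast_id]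
  have key : b - a = ((b.val - a.val : ℕ) : ZMod n) := by
    rw [Nat.cast_sub h, hb, ha]
  rw [key, ZMod.val_cast_of_lt (lt_of_le_of_lt (Nat.sub_le _ _) (ZMod.val_lt b))]

lemma le_of_cIdx_eq' {n s u v : ℕ} (hs : 0 < s) (hv : v < n)
    (h : cIdx n s u = cIdx n s v) : v ≤ u + 2 * s := by
  unfold cIdx at h
  have hus : min (u / s) (n / s - 1) * s ≤ u :=
    (Nat.le_div_iff_mul_le hs).mp (Nat.min_le_left _ _)
  rcases le_or_gt (v / s) (n / s - 1) with hle | hgt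
  · have hv2 : v < (v / s + 1) * s := (Nat.div_lt_iff_lt_mul hs).mp (Nat.lt_succ_self _)
    have h5 : min (u / s) (n / s - 1) = v / s := by omega
    nlinarith [hus, hv2, h5]
  · have h1 : min (u / s) (n / s - 1) = n / s - 1 := by omega
    have h2 : n < (n / s + 1) * s := (Nat.div_lt_iff_lt_mul hs).mp (Nat.lt_succ_self _)
    have h3 : (n / s - 1) * s ≤ u := h1 ▸ hus
    have h4 : (n / s + 1) * s ≤ (n / s - 1) * s + 2 * s := by
      rcases Nat.eq_zero_or_pos (n / s) with h | h
      · simp [h]; omega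
      · have h5 : n / s + 1 = (n / s - 1) + 2 := by omega
        rw [h5, Nat.add_mul]
    omega

lemma circ_min_le {n s : ℕ} [NeZero n] (hs : 0 < s) (a b : ZMod n)
    (h : cIdx n s a.val = cIdx n s b.val) :
    min ((b - a).val) ((a - b).val) ≤ 2 * s := by
  rcases le_total a.val b.val with hab | hab
  · have h1 := le_of_cIdx_eq' hs (ZMod.val_lt b) h
    have h2 := zmod_sub_val a b hab
    calc min ((b - a).val) ((a - b).val) ≤ (b - a).val := Nat.min_le_left _ _
      _ ≤ 2 * s := by omega
  · have h1 := le_of_cIdx_eq' hs (ZMod.val_lt a) h.symm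
    have h2 := zmod_sub_val b a hab
    calc min ((b - a).val) ((a - b).val) ≤ (a - b).val := Nat.min_le_right _ _
      _ ≤ 2 * s := by omega

lemma nat_div_eq_iff {s : ℕ} (hs : 0 < s) (t j : ℕ) :
    t / s = j ↔ j * s ≤ t ∧ t < (j + 1) * s := by
  constructor
  · rintro rfl
    exact ⟨Nat.div_mul_le_self t s, (Nat.div_lt_iff_lt_mul hs).mp (Nat.lt_succ_self _)⟩
  · rintro ⟨h1, h2⟩
    have a1 : j ≤ t / s := (Nat.le_div_iff_mul_le hs).mpr h1
    have a2 : t / s < j + 1 := (Nat.div_lt_iff_lt_mul hs).mpr h2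
    omega

lemma card_cIdx_range {n s j : ℕ} (hs : 0 < s) (hq : 1 ≤ n / s) (hj : j ≤ n / s - 1) :
    s ≤ ((Finset.range n).filter fun t => cIdx n s t = j).card ∧
    ((Finset.range n).filter fun t => cIdx n s t = j).card ≤ 2 * s := by
  have hqs : (n / s) * s ≤ n := Nat.div_mul_le_self n s
  have hn2 : n < (n / s + 1) * s := (Nat.div_lt_iff_lt_mul hs).mp (Nat.lt_succ_self _)
  rcases lt_or_eq_of_le hj with hlt | heq
  · have hset : ((Finset.range n).filter fun t => cIdx n s t = j)
        = Finset.Ico (j * s) ((j + 1) * s) := by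
      ext t
      simp only [Finset.mem_filter, Finset.mem_range, Finset.mem_Ico]
      simp only [cIdx]
      constructor
      · rintro ⟨htn, hmin⟩
        have hts : t / s = j := by omega
        exact (nat_div_eq_iff hs t j).mp hts
      · intro hb
        have hts : t / s = j := (nat_div_eq_iff hs t j).mpr hb
        refine ⟨?_, by omega⟩
        have h1 : (j + 1) * s ≤ (n / s - 1) * s := Nat.mul_le_mul_right s (by omega)
        have h2 : (n / s - 1) * s ≤ (n / s) * s := Nat.mul_le_mul_right s (by omega)
        omega
    rw [hset, Nat.card_Ico]
    constructor <;> · rw [Nat.add_mul, Nat.one_mul]; omega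
  · have hset : ((Finset.range n).filter fun t => cIdx n s t = j)
        = Finset.Ico ((n / s - 1) * s) n := by
      ext t
      simp only [Finset.mem_filter, Finset.mem_range, Finset.mem_Ico]
      simp only [cIdx]
      constructor
      · rintro ⟨htn, hmin⟩
        have hts : n / s - 1 ≤ t / s := by omega
        exact ⟨(Nat.le_div_iff_mul_le hs).mp hts, htn⟩
      · rintro ⟨h1, h2⟩
        have hts : n / s - 1 ≤ t / s := (Nat.le_div_iff_mul_le hs).mpr h1
        exact ⟨h2, by omega⟩
    rw [hset, Nat.card_Ico]
    obtain ⟨q', hq'⟩ : ∃ q', n / s = q' + 1 := ⟨n / s - 1, (Nat.sub_add_cancel hq).symm⟩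
    rw [hq'] at hqs hn2 ⊢
    simp only [Nat.add_sub_cancel]
    rw [Nat.add_mul] at hqs
    rw [show q' + 1 + 1 = q' + 2 from rfl, Nat.add_mul] at hn2
    omega

lemma card_cIdx_fiber {n s j : ℕ} [NeZero n] (hs : 0 < s) (hq : 1 ≤ n / s) (hj : j ≤ n / s - 1) :
    s ≤ {z : ZMod n | cIdx n s z.val = j}.ncard ∧
    {z : ZMod n | cIdx n s z.val = j}.ncard ≤ 2 * s := by
  have hcard : {z : ZMod n | cIdx n s z.val = j}.ncard
      = ((Finset.range n).filter fun t => cIdx n s t = j).card := by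
    rw [Set.ncard_eq_toFinset_card', Set.toFinset_setOf]
    refine Finset.card_bij (fun z _ => z.val) ?_ ?_ ?_
    · intro z hz
      simp only [Finset.mem_filter, Finset.mem_univ, true_and] at hz
      simp only [Finset.mem_filter, Finset.mem_range]
      exact ⟨ZMod.val_lt z, hz⟩
    · intro z1 _ z2 _ h
      exact ZMod.val_injective n h
    · intro t ht
      simp only [Finset.mem_filter, Finset.mem_range] at ht
      refine ⟨(t : ZMod n), ?_, ?_⟩
      · simp only [Finset.mem_filter, Finset.mem_univ, true_and]
        rw [ZMod.val_cast_of_lt ht.1]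
        exact ht.2
      · exact ZMod.val_cast_of_lt ht.1
  rw [hcard]
  exact card_cIdx_range hs hq hj

section walks
variable {d n : ℕ} [NeZero n] [Fact (1 < n)]

lemma torus_adj_step (x : Fin d → ZMod n) (i : Fin d) :
    (torusGraph d n).Adj x (Function.update x i (x i + 1)) := by
  haveI : Nontrivial (ZMod n) := ZMod.nontrivial n
  refine ⟨?_, i, ?_, ?_⟩
  · intro h
    have h2 := congrFun h i
    rw [Function.update_self] at h2
    exact one_ne_zero (left_eq_add.mp h2)
  · right; rw [Function.update_self]
  · intro j hj; rw [Function.update_of_ne hj]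

lemma torus_walk_add (x : Fin d → ZMod n) (i : Fin d) (m : ℕ) :
    ∃ w : (torusGraph d n).Walk x (Function.update x i (x i + (m : ZMod n))),
      w.length ≤ m := by
  induction m with
  | zero =>
    refine ⟨SimpleGraph.Walk.nil.copy rfl ?_, by simp⟩
    simp
  | succ m ih =>
    obtain ⟨w, hw⟩ := ih
    have hadj := torus_adj_step (Function.update x i (x i + (m : ZMod n))) i
    have heq : Function.update (Function.update x i (x i + (m : ZMod n))) i
        (Function.update x i (x i + (m : ZMod n)) i + 1)
        = Function.update x i (x i + ((m + 1 : ℕ) : ZMod n)) := by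
      rw [Function.update_self, Function.update_idem]
      push_cast
      ring_nf
    refine ⟨(w.concat hadj).copy rfl heq, ?_⟩
    rw [SimpleGraph.Walk.length_copy, SimpleGraph.Walk.length_concat]
    omega

lemma torus_walk_update (x : Fin d → ZMod n) (i : Fin d) (b : ZMod n) :
    ∃ w : (torusGraph d n).Walk x (Function.update x i b),
      w.length ≤ min ((b - x i).val) ((x i - b).val) := by
  rcases le_total ((b - x i).val) ((x i - b).val) with h | h
  · obtain ⟨w, hw⟩ := torus_walk_add x i ((b - x i).val)
    have heq : Function.update x i (x i + (((b - x i).val : ℕ) : ZMod n))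
        = Function.update x i b := by
      rw [ZMod.natCast_val, ZMod.cast_id]
      ring_nf
    exact ⟨(w.copy rfl heq), by rw [SimpleGraph.Walk.length_copy]; omega⟩
  · obtain ⟨w, hw⟩ := torus_walk_add (Function.update x i b) i (((x i - b).val))
    have heq : Function.update (Function.update x i b) i
        (Function.update x i b i + (((x i - b).val : ℕ) : ZMod n)) = x := by
      rw [Function.update_self, Function.update_idem, ZMod.natCast_val, ZMod.cast_id]
      have : b + (x i - b) = x i := by ring
      rw [this, Function.update_eq_self]
    refine ⟨((w.copy rfl heq).reverse), ?_⟩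
    rw [SimpleGraph.Walk.length_reverse, SimpleGraph.Walk.length_copy]
    omega

lemma torus_walk_multi (S : Finset (Fin d)) :
    ∀ x y : Fin d → ZMod n, (∀ i, i ∉ S → x i = y i) →
    ∃ w : (torusGraph d n).Walk x y,
      w.length ≤ ∑ i ∈ S, min ((y i - x i).val) ((x i - y i).val) := by
  induction S using Finset.induction with
  | empty =>
    intro x y h
    have : x = y := funext fun i => h i (by simp)
    subst this
    exact ⟨SimpleGraph.Walk.nil, by simp⟩
  | @insert a S ha ih =>
    intro x y hxy
    obtain ⟨w1, hw1⟩ := torus_walk_update x a (y a)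
    obtain ⟨w2, hw2⟩ := ih (Function.update x a (y a)) y (by
      intro i hi
      rcases eq_or_ne i a with rfl | hne
      · rw [Function.update_self]
      · rw [Function.update_of_ne hne]
        exact hxy i (by simp [hi, hne]))
    refine ⟨w1.append w2, ?_⟩
    rw [SimpleGraph.Walk.length_append, Finset.sum_insert ha]
    have hsum : ∑ i ∈ S, min ((y i - Function.update x a (y a) i).val)
        ((Function.update x a (y a) i - y i).val)
        = ∑ i ∈ S, min ((y i - x i).val) ((x i - y i).val) := by
      refine Finset.sum_congr rfl fun i hi => ?_
      rw [Function.update_of_ne (by rintro rfl; exact ha hi)]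
    rw [hsum] at hw2
    omega

end walks


lemma four_mul_le_pow8 (d : ℕ) : 4 * d ≤ 8 ^ d := by
  induction d with
  | zero => simp
  | succ k ih =>
    have h1 : 1 ≤ 8 ^ k := Nat.one_le_pow k 8 (by norm_num)
    rw [pow_succ]
    omega

lemma cIdx_def (n s t : ℕ) : cIdx n s t = min (t / s) (n / s - 1) := rfl

/-- There is a constant `C = C(d) ∈ (1,∞)` such that for every `ε > 0`,
for all sufficiently large `n`, setting `r_k = ε·n^{d/(d+1)}·2^{−k}` and
`ℓ = ⌊(2/3)·log₂(ε·n^{d/(d+1)})⌋`, there exist partitions `P_1, …, P_ℓ` of the vertex set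
of `T_n^d` such that each `P_{k+1}` refines `P_k`, and every block `A` of `P_k` has diameter
at most `C·r_k` in the graph metric and cardinality `r_k^d ≤ #A ≤ C·r_k^d`. -/

theorem nested_partitions (d : ℕ) (hd : 1 ≤ d) :
    ∃ C : ℝ, 1 < C ∧
      ∀ ε > (0 : ℝ), ∃ N : ℕ, ∀ n ≥ N,
        ∃ P : ℕ → Set (Set (Fin d → ZMod n)),
          (∀ k : ℕ, 1 ≤ k →
              k ≤ ⌊(2 / 3 : ℝ) * Real.logb 2 (ε * (n : ℝ) ^ ((d : ℝ) / (d + 1)))⌋₊ →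
            Setoid.IsPartition (P k) ∧
            ∀ A ∈ P k,
              (∀ x ∈ A, ∀ y ∈ A,
                ((torusGraph d n).dist x y : ℝ)
                  ≤ C * (ε * (n : ℝ) ^ ((d : ℝ) / (d + 1)) / 2 ^ k)) ∧
              (ε * (n : ℝ) ^ ((d : ℝ) / (d + 1)) / 2 ^ k) ^ d ≤ (A.ncard : ℝ) ∧
              (A.ncard : ℝ) ≤ C * (ε * (n : ℝ) ^ ((d : ℝ) / (d + 1)) / 2 ^ k) ^ d) ∧
          (∀ k : ℕ, 1 ≤ k →
              k + 1 ≤ ⌊(2 / 3 : ℝ) * Real.logb 2 (ε * (n : ℝ) ^ ((d : ℝ) / (d + 1)))⌋₊ →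
            ∀ A ∈ P (k + 1), ∃ B ∈ P k, A ⊆ B) := by
  have hd0 : (0:ℝ) < (d:ℝ) := by exact_mod_cast hd
  have ha0 : (0:ℝ) < (d:ℝ) / ((d:ℝ) + 1) := by positivity
  have ha1 : (0:ℝ) < 1 - (d:ℝ) / ((d:ℝ) + 1) := by
    have : (d:ℝ) / ((d:ℝ) + 1) < 1 := (div_lt_one (by linarith)).mpr (by linarith)
    linarith
  refine ⟨(8:ℝ)^d, one_lt_pow₀ (by norm_num) (by omega), ?_⟩
  intro ε hε
  have h1 : Tendsto (fun n : ℕ => ε * (n:ℝ) ^ ((d:ℝ) / ((d:ℝ) + 1))) atTop atTop :=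
    ((tendsto_rpow_atTop ha0).comp tendsto_natCast_atTop_atTop).const_mul_atTop hε
  have h2 : Tendsto (fun n : ℕ => (n:ℝ) ^ (1 - (d:ℝ) / ((d:ℝ) + 1))) atTop atTop :=
    (tendsto_rpow_atTop ha1).comp tendsto_natCast_atTop_atTop
  obtain ⟨N, hN⟩ := eventually_atTop.mp
    (((h1.eventually_ge_atTop 1).and (h2.eventually_ge_atTop ε)).and (eventually_ge_atTop 2))
  refine ⟨N, ?_⟩
  intro n hn
  obtain ⟨⟨hR1, hεn⟩, hn2⟩ := hN n hn
  haveI : NeZero n := ⟨by omega⟩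
  haveI : Fact (1 < n) := ⟨by omega⟩
  set R := ε * (n : ℝ) ^ ((d : ℝ) / (d + 1)) with hR_def
  have hR0 : (0:ℝ) < R := lt_of_lt_of_le one_pos hR1
  have hnpos : (0:ℝ) < (n:ℝ) := by positivity
  have hRn : R ≤ (n:ℝ) := by
    have step : R ≤ (n:ℝ) ^ (1 - (d:ℝ) / ((d:ℝ) + 1)) * (n:ℝ) ^ ((d:ℝ) / ((d:ℝ) + 1)) :=
      mul_le_mul_of_nonneg_right hεn (Real.rpow_nonneg hnpos.le _)
    rwa [← Real.rpow_add hnpos, sub_add_cancel, Real.rpow_one] at step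
  set L := ⌊(2 / 3 : ℝ) * Real.logb 2 R⌋₊ with hL_def
  have hlog0 : 0 ≤ Real.logb 2 R := Real.logb_nonneg one_lt_two hR1
  have hfloor : (L:ℝ) ≤ (2/3) * Real.logb 2 R := Nat.floor_le (by positivity)
  have h2L : (2:ℝ)^L ≤ R := by
    have hh : ((2:ℝ)) ^ ((L:ℕ):ℝ) ≤ (2:ℝ) ^ (Real.logb 2 R) :=
      Real.rpow_le_rpow_of_exponent_le one_le_two (by linarith)
    rwa [Real.rpow_natCast, Real.rpow_logb two_pos (by norm_num) hR0] at hh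
  set s := ⌈R / 2^L⌉₊ with hs_def
  have hpow2L : (0:ℝ) < 2^L := by positivity
  have hrL1 : (1:ℝ) ≤ R / 2^L := (one_le_div hpow2L).mpr h2L
  have hs1 : 1 ≤ s := Nat.one_le_ceil_iff.mpr (by linarith)
  have hsge : R / 2^L ≤ (s:ℝ) := Nat.le_ceil _
  have hsle : (s:ℝ) ≤ 2 * (R / 2^L) := by
    have := Nat.ceil_lt_add_one (by linarith : (0:ℝ) ≤ R / 2^L)
    linarith
  -- key per-scale bounds
  have key : ∀ k : ℕ, 1 ≤ k → k ≤ L →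
      R / 2^k ≤ ((2^(L-k)*s : ℕ):ℝ) ∧ ((2^(L-k)*s : ℕ):ℝ) ≤ 2*(R/2^k) ∧ 2^(L-k)*s ≤ n := by
    intro k hk1 hkL
    have hpowk : ((2:ℝ))^(L-k) * 2^k = 2^L := by
      rw [← pow_add, Nat.sub_add_cancel hkL]
    have hcast : ((2^(L-k)*s : ℕ):ℝ) = (2:ℝ)^(L-k) * (s:ℝ) := by push_cast; ring
    have hpos1 : (0:ℝ) < (2:ℝ)^(L-k) := by positivity
    have hpos2 : (0:ℝ) < (2:ℝ)^k := by positivity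
    have e : (2:ℝ)^(L-k) * (R / 2^L) = R / 2^k := by
      rw [← hpowk]; field_simp
    have low : R / 2^k ≤ ((2^(L-k)*s : ℕ):ℝ) := by
      rw [hcast, ← e]
      exact mul_le_mul_of_nonneg_left hsge hpos1.le
    have high : ((2^(L-k)*s : ℕ):ℝ) ≤ 2*(R/2^k) := by
      rw [hcast]
      calc (2:ℝ)^(L-k) * (s:ℝ) ≤ (2:ℝ)^(L-k) * (2 * (R / 2^L)) :=
            mul_le_mul_of_nonneg_left hsle hpos1.le
        _ = 2 * ((2:ℝ)^(L-k) * (R / 2^L)) := by ring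
        _ = 2 * (R/2^k) := by rw [e]
    refine ⟨low, high, ?_⟩
    have h2k : (2:ℝ) ≤ 2^k := by
      calc (2:ℝ) = 2^1 := (pow_one 2).symm
        _ ≤ 2^k := pow_le_pow_right₀ one_le_two hk1
    have hrk : R / 2^k ≤ R / 2 := by
      apply div_le_div_of_nonneg_left hR0.le (by norm_num) h2k
    have : ((2^(L-k)*s : ℕ):ℝ) ≤ (n:ℝ) := by
      calc ((2^(L-k)*s : ℕ):ℝ) ≤ 2*(R/2^k) := high
        _ ≤ 2*(R/2) := by linarith
        _ = R := by ring
        _ ≤ (n:ℝ) := hRn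
    exact_mod_cast this
  refine ⟨fun k => (Setoid.ker (fun x : Fin d → ZMod n =>
      fun i : Fin d => cIdx n (2^(L-k)*s) ((x i).val))).classes, ?_, ?_⟩
  · intro k hk1 hkL
    obtain ⟨hlow, hhigh, hskn⟩ := key k hk1 hkL
    set sk := 2^(L-k)*s with hsk_def
    have hsk0 : 0 < sk := by positivity
    have hq1 : 1 ≤ n / sk := (Nat.one_le_div_iff hsk0).mpr hskn
    have hrk0 : (0:ℝ) < R / 2^k := by positivity
    refine ⟨Setoid.isPartition_classes _, ?_⟩
    intro A hA
    obtain ⟨y₀, hy⟩ := hA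
    have hmem : ∀ x, x ∈ A ↔ (fun i : Fin d => cIdx n sk ((x i).val))
        = (fun i : Fin d => cIdx n sk ((y₀ i).val)) := by
      intro x; rw [hy]; exact Iff.rfl
    constructor
    · -- diameter
      intro x hx y hyA
      have hfx := (hmem x).mp hx
      have hfy := (hmem y).mp hyA
      have hco : ∀ i, cIdx n sk ((x i).val) = cIdx n sk ((y i).val) := by
        intro i
        have := congrFun hfx i
        have h2 := congrFun hfy i
        rw [this, h2]
      obtain ⟨w, hw⟩ := torus_walk_multi (Finset.univ) x y (by simp)
      have hdist : (torusGraph d n).dist x y ≤ w.length := SimpleGraph.dist_le w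
      have hsum : ∑ i : Fin d, min ((y i - x i).val) ((x i - y i).val) ≤ d * (2 * sk) := by
        calc ∑ i : Fin d, min ((y i - x i).val) ((x i - y i).val)
            ≤ ∑ _i : Fin d, 2 * sk :=
              Finset.sum_le_sum fun i _ => circ_min_le hsk0 (x i) (y i) (hco i)
          _ = d * (2 * sk) := by rw [Finset.sum_const, Finset.card_univ, Fintype.card_fin,
              smul_eq_mul]
      have hd1 : ((torusGraph d n).dist x y : ℝ) ≤ (d:ℝ) * (2 * (sk:ℝ)) := by
        have : (torusGraph d n).dist x y ≤ d * (2*sk) := le_trans (le_trans hdist hw) hsum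
        exact_mod_cast this
      have h48 : (4:ℝ) * d ≤ (8:ℝ)^d := by exact_mod_cast four_mul_le_pow8 d
      calc ((torusGraph d n).dist x y : ℝ) ≤ (d:ℝ) * (2 * (sk:ℝ)) := hd1
        _ ≤ (d:ℝ) * (2 * (2*(R/2^k))) := by
            have : (0:ℝ) ≤ (d:ℝ) := hd0.le
            nlinarith [hhigh]
        _ = (4*(d:ℝ)) * (R/2^k) := by ring
        _ ≤ (8:ℝ)^d * (R/2^k) := mul_le_mul_of_nonneg_right h48 hrk0.le
    · -- cardinality
      have hAeq : A = Set.univ.pi (fun i => {z : ZMod n | cIdx n sk z.val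
          = cIdx n sk ((y₀ i).val)}) := by
        ext x
        rw [hmem x, funext_iff]
        simp [Set.mem_pi]
      have hncard : A.ncard = ∏ i : Fin d, ({z : ZMod n | cIdx n sk z.val
          = cIdx n sk ((y₀ i).val)}).ncard := by
        rw [hAeq, ← Nat.card_coe_set_eq,
          Nat.card_congr (Equiv.Set.univPi _), Nat.card_pi]
        exact Finset.prod_congr rfl fun i _ => Nat.card_coe_set_eq _
      have hcoord : ∀ i : Fin d, sk ≤ ({z : ZMod n | cIdx n sk z.val
          = cIdx n sk ((y₀ i).val)}).ncard ∧ ({z : ZMod n | cIdx n sk z.val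
          = cIdx n sk ((y₀ i).val)}).ncard ≤ 2 * sk := by
        intro i
        refine card_cIdx_fiber hsk0 hq1 ?_
        rw [cIdx_def]
        exact Nat.min_le_right _ _
      have hlo : sk ^ d ≤ A.ncard := by
        rw [hncard]
        calc sk ^ d = ∏ _i : Fin d, sk := by
              rw [Finset.prod_const, Finset.card_univ, Fintype.card_fin]
          _ ≤ ∏ i : Fin d, ({z : ZMod n | cIdx n sk z.val
              = cIdx n sk ((y₀ i).val)}).ncard :=
            Finset.prod_le_prod (fun i _ => Nat.zero_le _) (fun i _ => (hcoord i).1)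
      have hhi : A.ncard ≤ (2 * sk) ^ d := by
        rw [hncard]
        calc ∏ i : Fin d, ({z : ZMod n | cIdx n sk z.val
              = cIdx n sk ((y₀ i).val)}).ncard
            ≤ ∏ _i : Fin d, 2 * sk :=
              Finset.prod_le_prod (fun i _ => Nat.zero_le _) (fun i _ => (hcoord i).2)
          _ = (2 * sk) ^ d := by rw [Finset.prod_const, Finset.card_univ, Fintype.card_fin]
      constructor
      · calc (R/2^k) ^ d ≤ ((sk:ℕ):ℝ) ^ d := pow_le_pow_left₀ hrk0.le hlow d
          _ ≤ (A.ncard : ℝ) := by exact_mod_cast hlo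
      · have h48 : ((4:ℝ))^d ≤ (8:ℝ)^d := pow_le_pow_left₀ (by norm_num) (by norm_num) d
        calc (A.ncard : ℝ) ≤ ((2*sk : ℕ):ℝ) ^ d := by exact_mod_cast hhi
          _ ≤ (2 * (2 * (R/2^k))) ^ d := by
              apply pow_le_pow_left₀ (by positivity)
              push_cast
              linarith
          _ = (4:ℝ)^d * (R/2^k)^d := by rw [← mul_pow]; ring_nf
          _ ≤ (8:ℝ)^d * (R/2^k)^d := mul_le_mul_of_nonneg_right h48 (by positivity)
  · -- refinement
    intro k hk1 hk1L A hA
    obtain ⟨y₀, hy⟩ := hA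
    refine ⟨_, Setoid.mem_classes _ y₀, ?_⟩
    intro x hx
    have hfx : (fun i : Fin d => cIdx n (2^(L-(k+1))*s) ((x i).val))
        = (fun i : Fin d => cIdx n (2^(L-(k+1))*s) ((y₀ i).val)) := by
      rw [hy] at hx; exact hx
    show (fun i : Fin d => cIdx n (2^(L-k)*s) ((x i).val))
        = (fun i : Fin d => cIdx n (2^(L-k)*s) ((y₀ i).val))
    have hpow : 2^(L-k)*s = 2 * (2^(L-(k+1))*s) := by
      have : L - k = (L - (k+1)) + 1 := by omega
      rw [this, pow_succ, mul_comm (2^(L-(k+1))) 2, mul_assoc]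
    funext i
    have hco := congrFun hfx i
    rw [hpow, cIdx_double, cIdx_double, hco]
end
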